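/- Let D be an invariant metric on the product group (ℤ × ℤ) × ℤ such that D((a,b,0),(0,0,0)) = |a| + |b| for all a,b ∈ ℤ. Then it is impossible that both of the following hold: there exists n ∈ ℤ with D((0,0,n),(1,0,0)) < 1/2, and there exists m ∈ ℤ with D((0,1,0),(0,0,m)) < 1/2. In other words, the two elements (1,0,0) and (0,1,0) cannot both lie within distance 1/2 of the cyclic subgroup {(0,0,k) : k ∈ ℤ}. -/

import Mathlib

/-- If `D` is an invariant metric on `(ℤ × ℤ) × ℤ` whose restriction to
`ℤ² × {0}` is the ℓ¹ norm, then `e₁ = ((1,0),0)` and `e₂ = ((0,1),0)` cannot both lie within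
distance `1/2` of the cyclic subgroup `{((0,0), k) : k ∈ ℤ}`. -/
theorem not_both_close_to_cyclic_subgroup
    (D : (ℤ × ℤ) × ℤ → (ℤ × ℤ) × ℤ → ℝ)
    (hnonneg : ∀ x y, 0 ≤ D x y)
    (hzero : ∀ x y, D x y = 0 ↔ x = y)
    (hsymm : ∀ x y, D x y = D y x)
    (htri : ∀ x y z, D x z ≤ D x y + D y z)
    (hinv : ∀ a x y, D (a + x) (a + y) = D x y)
    (hext : ∀ a b : ℤ, D ((a, b), 0) ((0, 0), 0) = |(a : ℝ)| + |(b : ℝ)|) :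
    ¬ ((∃ n : ℤ, D ((0, 0), n) ((1, 0), 0) < 1 / 2) ∧
       (∃ m : ℤ, D ((0, 1), 0) ((0, 0), m) < 1 / 2)) := by
  rintro ⟨⟨n, hn⟩, ⟨m, hm⟩⟩
  set N : (ℤ × ℤ) × ℤ → ℝ := fun z => D z 0 with hN
  have Nadd : ∀ z w, N (z + w) ≤ N z + N w := by
    intro z w
    have h1 : D (z + w) z = N w := by
      have := hinv z w 0
      simpa using this
    calc D (z + w) 0 ≤ D (z + w) z + D z 0 := htri _ _ _
      _ = N w + N z := by rw [h1]
      _ = N z + N w := by ring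
  have Nneg : ∀ z, N (-z) = N z := by
    intro z
    have := hinv z (-z) 0
    simp only [add_neg_cancel, add_zero] at this
    exact this.symm.trans (hsymm 0 z)
  have Nnonneg : ∀ z, 0 ≤ N z := fun z => hnonneg z 0
  have Nnsmul : ∀ (k : ℕ) (z), N (k • z) ≤ (k : ℝ) * N z := by
    intro k z
    induction k with
    | zero =>
      simp only [zero_smul, Nat.cast_zero, zero_mul]
      have : N (0 : (ℤ × ℤ) × ℤ) = 0 := (hzero 0 0).mpr rfl
      rw [this]
    | succ k ih =>
      have : (k + 1) • z = k • z + z := succ_nsmul z k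
      rw [this]
      calc N (k • z + z) ≤ N (k • z) + N z := Nadd _ _
        _ ≤ (k : ℝ) * N z + N z := by linarith
        _ = ((k + 1 : ℕ) : ℝ) * N z := by push_cast; ring
  have Nzsmul : ∀ (k : ℤ) (z), N (k • z) ≤ |(k : ℝ)| * N z := by
    intro k z
    have habs : ((k.natAbs : ℝ)) = |(k : ℝ)| := by
      rw [Nat.cast_natAbs, Int.cast_abs]
    have hb : N (k.natAbs • z) ≤ |(k : ℝ)| * N z := by
      rw [← habs]; exact Nnsmul _ _
    rcases Int.natAbs_eq k with h | h
    · calc N (k • z) = N ((k.natAbs : ℤ) • z) := by rw [← h]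
        _ = N (k.natAbs • z) := by rw [natCast_zsmul]
        _ ≤ _ := hb
    · calc N (k • z) = N (-((k.natAbs : ℤ) • z)) := by rw [← neg_smul, ← h]
        _ = N ((k.natAbs : ℤ) • z) := Nneg _
        _ = N (k.natAbs • z) := by rw [natCast_zsmul]
        _ ≤ _ := hb
  -- the two near elements
  set u : (ℤ × ℤ) × ℤ := ((1, 0), -n) with hu
  set v : (ℤ × ℤ) × ℤ := ((0, 1), -m) with hv
  have hNu : N u < 1 / 2 := by
    have h1 : D (((0,0),n) + u) (((0,0),n) + 0) = N u := hinv _ _ _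
    have h2 : ((0,0),n) + u = (((1,0),0) : (ℤ × ℤ) × ℤ) := by
      simp [hu, Prod.ext_iff]
    rw [h2, add_zero] at h1
    rw [← h1, hsymm]; exact hn
  have hNv : N v < 1 / 2 := by
    have h1 : D (((0,0),m) + v) (((0,0),m) + 0) = N v := hinv _ _ _
    have h2 : ((0,0),m) + v = (((0,1),0) : (ℤ × ℤ) × ℤ) := by
      simp [hv, Prod.ext_iff]
    rw [h2, add_zero] at h1
    rw [← h1]; exact hm
  -- combination: m • u + (-n) • v = ((m, -n), 0)
  have hcomb : (((m, -n), 0) : (ℤ × ℤ) × ℤ) = m • u + (-n) • v := by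
    simp [hu, hv, Prod.ext_iff, smul_eq_mul]
    ring
  have hbig : |(m : ℝ)| + |(n : ℝ)| = N ((m, -n), 0) := by
    show |(m : ℝ)| + |(n : ℝ)| = D ((m, -n), 0) ((0, 0), 0)
    have := hext m (-n)
    simp only [Int.cast_neg, abs_neg] at this
    exact this.symm
  have hle : N ((m, -n), 0) ≤ |(m : ℝ)| * N u + |(n : ℝ)| * N v := by
    rw [hcomb]
    calc N (m • u + (-n) • v) ≤ N (m • u) + N ((-n) • v) := Nadd _ _
      _ ≤ |(m : ℝ)| * N u + |((-n : ℤ) : ℝ)| * N v := by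
          gcongr <;> [exact Nzsmul m u; exact Nzsmul (-n) v]
      _ = |(m : ℝ)| * N u + |(n : ℝ)| * N v := by push_cast; rw [abs_neg]
  by_cases hmn : m = 0 ∧ n = 0
  · obtain ⟨hm0, hn0⟩ := hmn
    subst hm0; subst hn0
    have h1 : N u = 1 := by
      have := hext 1 0
      rw [show (((0,0),0) : (ℤ × ℤ) × ℤ) = 0 from rfl] at this
      simpa [hu, hN] using this
    linarith
  · have hpos : 0 < |(m : ℝ)| + |(n : ℝ)| := by
      rcases not_and_or.mp hmn with h | h
      · have : (0 : ℝ) < |(m : ℝ)| := by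
          simp only [abs_pos]; exact_mod_cast h
        have := abs_nonneg (n : ℝ); linarith
      · have : (0 : ℝ) < |(n : ℝ)| := by
          simp only [abs_pos]; exact_mod_cast h
        have := abs_nonneg (m : ℝ); linarith
    have h1 : |(m : ℝ)| * N u ≤ |(m : ℝ)| * (1/2) := by
      apply mul_le_mul_of_nonneg_left (le_of_lt hNu) (abs_nonneg _)
    have h2 : |(n : ℝ)| * N v ≤ |(n : ℝ)| * (1/2) := by
      apply mul_le_mul_of_nonneg_left (le_of_lt hNv) (abs_nonneg _)
    nlinarith [hbig, hle]
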